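/- Let X ⊆ ℝⁿ be a non-empty open set and C ⊆ ℝⁿ a convex cone such that X + C ⊆ X. If no non-zero integer vector d ∈ ℤⁿ is orthogonal to every element of C, then X contains an integer point, i.e., X ∩ ℤⁿ ≠ ∅. -/

import Mathlib

open Filter Topology

lemma aux_rec (n : ℕ) (u : Fin n → ℝ) {ε : ℝ} (hε : 0 < ε) :
    ∃ (a : ℕ) (w : Fin n → ℤ), 1 ≤ a ∧
      ‖(a : ℝ) • u - (fun i => (w i : ℝ))‖ < ε := by
  set p : ℕ → (Fin n → ℝ) := fun k i => Int.fract ((k : ℝ) * u i) with hp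
  have hmem : ∀ k, p k ∈ Set.pi Set.univ (fun _ : Fin n => Set.Icc (0:ℝ) 1) := by
    intro k i _
    exact ⟨Int.fract_nonneg _, (Int.fract_lt_one _).le⟩
  have hcomp : IsCompact (Set.pi Set.univ (fun _ : Fin n => Set.Icc (0:ℝ) 1)) :=
    isCompact_univ_pi fun _ => isCompact_Icc
  obtain ⟨q, -, φ, hφ, hlim⟩ := hcomp.tendsto_subseq hmem
  rw [Metric.tendsto_atTop] at hlim
  obtain ⟨K, hK⟩ := hlim (ε/2) (half_pos hε)
  refine ⟨φ (K+1) - φ K, fun i => ⌊(φ (K+1) : ℝ) * u i⌋ - ⌊(φ K : ℝ) * u i⌋, ?_, ?_⟩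
  · have h1 : φ K < φ (K+1) := hφ (by omega)
    omega
  · have hle : φ K ≤ φ (K+1) := (hφ (by omega : K < K+1)).le
    rw [pi_norm_lt_iff hε]
    intro i
    have hval : ((((φ (K+1) - φ K : ℕ)) : ℝ) • u - (fun i => ((⌊(φ (K+1) : ℝ) * u i⌋ - ⌊(φ K : ℝ) * u i⌋ : ℤ) : ℝ))) i
        = p (φ (K+1)) i - p (φ K) i := by
      simp only [Pi.sub_apply, Pi.smul_apply, smul_eq_mul, hp, Int.fract]
      push_cast [Nat.cast_sub hle]
      ring
    rw [Real.norm_eq_abs, hval]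
    calc |p (φ (K+1)) i - p (φ K) i| ≤ dist (p (φ (K+1))) (p (φ K)) := by
          rw [← Real.dist_eq]
          exact dist_le_pi_dist _ _ i
      _ ≤ dist (p (φ (K+1))) q + dist q (p (φ K)) := dist_triangle _ _ _
      _ < ε/2 + ε/2 := by
          refine add_lt_add ?_ ?_
          · exact hK (K+1) (Nat.le_succ K)
          · rw [dist_comm]; exact hK K le_rfl
      _ = ε := add_halves ε

open Finset in
theorem stmt_4 (n : ℕ) (X C : Set (Fin n → ℝ))
    (hXne : X.Nonempty) (hXopen : IsOpen X)
    (hCcone : ∀ u ∈ C, ∀ t : ℝ, 0 ≤ t → t • u ∈ C)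
    (hCadd : ∀ u ∈ C, ∀ v ∈ C, u + v ∈ C)
    (hXC : ∀ x ∈ X, ∀ u ∈ C, x + u ∈ X)
    (hortho : ∀ d : Fin n → ℤ, (∀ u ∈ C, ∑ i, (d i : ℝ) * u i = 0) → d = 0) :
    ∃ x ∈ X, ∀ i, ∃ z : ℤ, x i = (z : ℝ) := by
  classical
  obtain ⟨x₀, hx₀⟩ := hXne
  rcases C.eq_empty_or_nonempty with hCe | ⟨c₀, hc₀⟩
  · refine ⟨x₀, hx₀, fun i => ?_⟩
    have h1 : (fun _ : Fin n => (1:ℤ)) = 0 := hortho _ (by simp [hCe])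
    exact absurd (congrFun h1 i) (by simp)
  have h0C : (0 : Fin n → ℝ) ∈ C := by simpa using hCcone c₀ hc₀ 0 le_rfl
  set S : Set (Fin n → ℝ) :=
    {y | ∃ c ∈ C, ∃ w : Fin n → ℤ, y = c + fun i => (w i : ℝ)} with hSdef
  have hCS : C ⊆ S := fun c hc => ⟨c, hc, 0, by funext i; simp⟩
  have hZS : ∀ w : Fin n → ℤ, (fun i => (w i : ℝ)) ∈ S := fun w => ⟨0, h0C, w, by funext i; simp⟩
  have hSadd : ∀ x ∈ S, ∀ y ∈ S, x + y ∈ S := by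
    rintro _ ⟨c, hc, w, rfl⟩ _ ⟨c', hc', w', rfl⟩
    refine ⟨c + c', hCadd c hc c' hc', w + w', ?_⟩
    funext i; push_cast; ring_nf
    simp [add_assoc, add_comm, add_left_comm]
  -- negation of elements of C belongs to the closure of S
  have hnegC : ∀ c ∈ C, -c ∈ closure S := by
    intro c hc
    rw [Metric.mem_closure_iff]
    intro ε hε
    obtain ⟨a, w, ha, hnorm⟩ := aux_rec n c hε
    have ha' : (0:ℝ) ≤ (a:ℝ) - 1 := by
      have : (1:ℝ) ≤ (a:ℝ) := by exact_mod_cast ha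
      linarith
    refine ⟨((a:ℝ) - 1) • c + fun i => ((-w) i : ℝ),
      ⟨((a:ℝ) - 1) • c, hCcone c hc _ ha', -w, rfl⟩, ?_⟩
    rw [dist_eq_norm]
    have heq : -c - (((a:ℝ) - 1) • c + fun i => ((-w) i : ℝ))
        = -((a:ℝ) • c - fun i => (w i : ℝ)) := by
      funext i
      simp only [Pi.sub_apply, Pi.add_apply, Pi.neg_apply, Pi.smul_apply, smul_eq_mul,
        Int.cast_neg]
      ring
    rw [heq, norm_neg]
    exact hnorm
  -- the closed subgroup H
  let H : AddSubgroup (Fin n → ℝ) :=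
  { carrier := closure S
    zero_mem' := subset_closure ⟨0, h0C, 0, by funext i; simp⟩
    add_mem' := by
      intro a b ha hb
      rw [Metric.mem_closure_iff] at ha hb ⊢
      intro ε hε
      obtain ⟨s, hs, hds⟩ := ha (ε/2) (half_pos hε)
      obtain ⟨t, ht, hdt⟩ := hb (ε/2) (half_pos hε)
      refine ⟨s + t, hSadd s hs t ht, ?_⟩
      calc dist (a + b) (s + t) ≤ dist a s + dist b t := dist_add_add_le a b s t
        _ < ε/2 + ε/2 := add_lt_add hds hdt
        _ = ε := add_halves ε
    neg_mem' := by
      intro a ha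
      rw [Metric.mem_closure_iff] at ha ⊢
      intro ε hε
      obtain ⟨s, hs, hds⟩ := ha (ε/2) (half_pos hε)
      obtain ⟨c, hc, w, rfl⟩ := hs
      have h1 : -c ∈ closure S := hnegC c hc
      rw [Metric.mem_closure_iff] at h1
      obtain ⟨y, hy, hdy⟩ := h1 (ε/2) (half_pos hε)
      refine ⟨y + fun i => ((-w) i : ℝ), hSadd y hy _ (hZS (-w)), ?_⟩
      have hkey : dist (-(c + fun i => (w i : ℝ))) (y + fun i => ((-w) i : ℝ))
          = dist (-c) y := by
        rw [dist_eq_norm, dist_eq_norm]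
        congr 1
        funext i
        simp only [Pi.sub_apply, Pi.neg_apply, Pi.add_apply, Int.cast_neg]
        ring
      calc dist (-a) (y + fun i => ((-w) i : ℝ))
          ≤ dist (-a) (-(c + fun i => (w i : ℝ)))
            + dist (-(c + fun i => (w i : ℝ))) (y + fun i => ((-w) i : ℝ)) :=
            dist_triangle _ _ _
        _ = dist a (c + fun i => (w i : ℝ)) + dist (-c) y := by rw [dist_neg_neg, hkey]
        _ < ε/2 + ε/2 := add_lt_add hds hdy
        _ = ε := add_halves ε }
  have hHc : IsClosed (H : Set (Fin n → ℝ)) := isClosed_closure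
  have hSH : S ⊆ (H : Set (Fin n → ℝ)) := subset_closure
  have hCH : ∀ c ∈ C, c ∈ H := fun c hc => hSH (hCS hc)
  have hZH : ∀ w : Fin n → ℤ, (fun i => (w i : ℝ)) ∈ H := fun w => hSH (hZS w)
  -- the maximal subspace inside H
  let V : Submodule ℝ (Fin n → ℝ) :=
  { carrier := {v | ∀ t : ℝ, t • v ∈ H}
    zero_mem' := fun t => by simpa using H.zero_mem
    add_mem' := by
      intro a b ha hb t
      rw [smul_add]
      exact H.add_mem (ha t) (hb t)
    smul_mem' := by
      intro c v hv t
      rw [smul_smul]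
      exact hv (t * c) }
  by_cases hVtop : V = ⊤
  · -- density finish
    obtain ⟨ε, hε, hball⟩ := Metric.isOpen_iff.1 hXopen x₀ hx₀
    have hx₀H : -x₀ ∈ closure S := by
      have h2 : (1:ℝ) • (-x₀) ∈ H := (hVtop ▸ Submodule.mem_top : -x₀ ∈ V) 1
      rwa [one_smul] at h2
    rw [Metric.mem_closure_iff] at hx₀H
    obtain ⟨y, ⟨c, hc, w, rfl⟩, hdy⟩ := hx₀H (ε) hε
    have hmem : -(c + fun i => (w i : ℝ)) ∈ X := by
      apply hball
      rw [Metric.mem_ball, dist_comm, ← dist_neg_neg, neg_neg]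
      exact hdy
    refine ⟨-(c + fun i => (w i : ℝ)) + c, hXC _ hmem c hc, fun i => ⟨-w i, ?_⟩⟩
    simp
  · -- contradiction via lattice duality
    exfalso
    obtain ⟨W, hW⟩ := Submodule.exists_isCompl V
    let PW : (Fin n → ℝ) →ₗ[ℝ] ↥W := W.linearProjOfIsCompl V hW.symm
    have hdecomp : ∀ x : Fin n → ℝ,
        ((V.linearProjOfIsCompl W hW x : Fin n → ℝ)) + ((PW x : Fin n → ℝ)) = x :=
      fun x => Submodule.projection_add_projection_eq_self hW x
    have hVH : ∀ v ∈ V, v ∈ H := fun v hv => by simpa using hv 1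
    have hPWH : ∀ x : Fin n → ℝ, x ∈ H → ((PW x : Fin n → ℝ)) ∈ H := by
      intro x hx
      have h1 : ((V.linearProjOfIsCompl W hW x : Fin n → ℝ)) ∈ H :=
        hVH _ (V.linearProjOfIsCompl W hW x).2
      have h2 : ((PW x : Fin n → ℝ)) = x - ((V.linearProjOfIsCompl W hW x : Fin n → ℝ)) :=
        eq_sub_of_add_eq' (hdecomp x)
      rw [h2]
      exact H.sub_mem hx h1
    let L : Submodule ℤ ↥W :=
    { carrier := {w : ↥W | (w : Fin n → ℝ) ∈ H}
      zero_mem' := by simpa using H.zero_mem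
      add_mem' := by
        intro a b ha hb
        have : ((a + b : ↥W) : Fin n → ℝ) = (a : Fin n → ℝ) + b := rfl
        simpa [this] using H.add_mem ha hb
      smul_mem' := by
        intro m a ha
        have : ((m • a : ↥W) : Fin n → ℝ) = m • (a : Fin n → ℝ) := rfl
        simpa [this] using H.zsmul_mem ha m }
    -- discreteness of L
    have hiso : ∃ ε > 0, ∀ x : ↥W, (x : Fin n → ℝ) ∈ H → ‖(x : Fin n → ℝ)‖ < ε → x = 0 := by
      by_contra hcon
      push_neg at hcon
      have hseq : ∀ k : ℕ, ∃ y : Fin n → ℝ, y ∈ W ∧ y ∈ H ∧ ‖y‖ < 1/(k+1) ∧ y ≠ 0 := by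
        intro k
        obtain ⟨x, hxH, hxn, hx0⟩ := hcon (1/(k+1)) (by positivity)
        exact ⟨(x : Fin n → ℝ), x.2, hxH, hxn, fun h => hx0 (Subtype.ext h)⟩
      choose y hyW hyH hyn hy0 using hseq
      have hynorm : ∀ k, (0:ℝ) < ‖y k‖ := fun k => norm_pos_iff.2 (hy0 k)
      set e : ℕ → (Fin n → ℝ) := fun k => ‖y k‖⁻¹ • y k with he
      have hes : ∀ k, e k ∈ Metric.sphere (0 : Fin n → ℝ) 1 := by
        intro k
        simp only [Metric.mem_sphere, dist_zero_right, he, norm_smul, norm_inv, norm_norm]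
        exact inv_mul_cancel₀ (hynorm k).ne'
      obtain ⟨einf, heinfs, φ, hφ, hlim⟩ := (isCompact_sphere (0 : Fin n → ℝ) 1).tendsto_subseq hes
      have hyφ : Tendsto (fun k => ‖y (φ k)‖) atTop (𝓝 0) := by
        have h1 : Tendsto (fun k : ℕ => 1/((k:ℝ)+1)) atTop (𝓝 0) :=
          tendsto_one_div_add_atTop_nhds_zero_nat
        refine squeeze_zero (fun k => (hynorm _).le) (fun k => (hyn (φ k)).le) ?_
        exact h1.comp hφ.tendsto_atTop
      have heW : einf ∈ W := by
        have hWc : IsClosed (W : Set (Fin n → ℝ)) := Submodule.closed_of_finiteDimensional W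
        exact hWc.mem_of_tendsto hlim (Filter.Eventually.of_forall fun k =>
          W.smul_mem _ (hyW (φ k)))
      have heV : einf ∈ V := by
        intro t
        set m : ℕ → ℤ := fun k => ⌊t / ‖y (φ k)‖⌋ with hm
        have hmem : ∀ k, (m k : ℝ) • y (φ k) ∈ H := by
          intro k
          have h1 := H.zsmul_mem (hyH (φ k)) (m k)
          rwa [← Int.cast_smul_eq_zsmul ℝ] at h1
        have heq : ∀ k, (m k : ℝ) • y (φ k) = ((m k : ℝ) * ‖y (φ k)‖) • e (φ k) := by
          intro k
          rw [he, smul_smul, mul_assoc, mul_inv_cancel₀ (hynorm (φ k)).ne', mul_one]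
        have hslim : Tendsto (fun k => (m k : ℝ) * ‖y (φ k)‖) atTop (𝓝 t) := by
          have hb : ∀ k, |(m k : ℝ) * ‖y (φ k)‖ - t| ≤ ‖y (φ k)‖ := by
            intro k
            have h1 : (m k : ℝ) ≤ t / ‖y (φ k)‖ := Int.floor_le _
            have h2 : t / ‖y (φ k)‖ - 1 < m k := Int.sub_one_lt_floor _
            have hpos := hynorm (φ k)
            rw [abs_le]
            have h3 : (m k : ℝ) * ‖y (φ k)‖ ≤ t := (le_div_iff₀ hpos).1 h1
            have h4 : t < ((m k : ℝ) + 1) * ‖y (φ k)‖ := by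
              rw [← div_lt_iff₀ hpos]
              linarith
            constructor <;> nlinarith
          have habs : Tendsto (fun k => |(m k : ℝ) * ‖y (φ k)‖ - t|) atTop (𝓝 0) :=
            squeeze_zero (fun k => abs_nonneg _) hb hyφ
          rw [tendsto_iff_dist_tendsto_zero]
          simpa only [Real.dist_eq] using habs
        have htend : Tendsto (fun k => (m k : ℝ) • y (φ k)) atTop (𝓝 (t • einf)) := by
          have := hslim.smul hlim
          exact Tendsto.congr (fun k => (heq k).symm) this
        exact hHc.mem_of_tendsto htend (Filter.Eventually.of_forall hmem)
      have he0 : einf = 0 := by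
        have : einf ∈ V ⊓ W := ⟨heV, heW⟩
        rwa [hW.inf_eq_bot, Submodule.mem_bot] at this
      have : (1:ℝ) = 0 := by
        have := heinfs
        simp only [Metric.mem_sphere, dist_zero_right, he0, norm_zero] at this
        exact this.symm
      norm_num at this
    obtain ⟨ε, hε, hisol⟩ := hiso
    haveI hLdisc : DiscreteTopology ↥L := by
      apply discreteTopology_of_isOpen_singleton_zero
      have hset : ({0} : Set ↥L) = (Subtype.val) ⁻¹' (Metric.ball (0 : ↥W) ε) := by
        ext x
        simp only [Set.mem_singleton_iff, Set.mem_preimage, Metric.mem_ball, dist_zero_right]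
        constructor
        · rintro rfl; simpa using hε
        · intro hx
          have : (x : ↥W) = 0 := hisol (x : ↥W) x.2 (by
            rwa [show ‖((x : ↥W) : Fin n → ℝ)‖ = ‖(x : ↥W)‖ from rfl])
          exact Subtype.ext this
      rw [hset]
      exact Metric.isOpen_ball.preimage continuous_subtype_val
    have hsingle : ∀ i : Fin n, (Pi.single i (1:ℝ)) ∈ H := by
      intro i
      have : (fun j => ((Pi.single i (1:ℤ) : Fin n → ℤ) j : ℝ)) = Pi.single i (1:ℝ) := by
        funext j
        rcases eq_or_ne j i with rfl | hji
        · simp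
        · simp [Pi.single_apply, hji]
      rw [← this]
      exact hZH _
    have hPWL : ∀ x : Fin n → ℝ, x ∈ H → PW x ∈ L := fun x hx => hPWH x hx
    haveI hZL : IsZLattice ℝ L := by
      constructor
      rw [eq_top_iff]
      rintro w -
      have hw : w = PW (w : Fin n → ℝ) :=
        (Submodule.linearProjOfIsCompl_apply_left hW.symm w).symm
      have hsum : (w : Fin n → ℝ) = ∑ i, ((w : Fin n → ℝ) i) • (Pi.single i (1:ℝ) : Fin n → ℝ) := by
        conv_lhs => rw [pi_eq_sum_univ ((w : Fin n → ℝ))]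
        refine Finset.sum_congr rfl fun i _ => ?_
        congr 1
        funext j
        simp [Pi.single_apply, eq_comm]
      rw [hw, hsum, map_sum]
      refine Submodule.sum_mem _ fun i _ => ?_
      rw [map_smul]
      exact Submodule.smul_mem _ _ (Submodule.subset_span (hPWL _ (hsingle i)))
    haveI : ProperSpace ↥W := inferInstance
    haveI : Module.Finite ℤ ↥L := ZLattice.module_finite ℝ L
    haveI : Module.Free ℤ ↥L := ZLattice.module_free ℝ L
    let b := Module.Free.chooseBasis ℤ ↥L
    let bR := b.ofZLatticeBasis ℝ L
    haveI : Nonempty (Module.Free.ChooseBasisIndex ℤ ↥L) := by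
      by_contra hemp
      rw [not_nonempty_iff] at hemp
      have hWrank : Module.finrank ℝ ↥W = 0 := by
        rw [Module.finrank_eq_card_basis bR]
        simp
      have hWbot : W = ⊥ := Submodule.finrank_eq_zero.1 hWrank
      rw [hWbot] at hW
      exact hVtop (by simpa using hW.symm.sup_eq_top)
    obtain ⟨i₀⟩ := (inferInstance : Nonempty (Module.Free.ChooseBasisIndex ℤ ↥L))
    let F : (Fin n → ℝ) →ₗ[ℝ] ℝ := (bR.coord i₀).comp PW
    have hFZ : ∀ x : Fin n → ℝ, x ∈ H → ∃ z : ℤ, F x = (z : ℝ) := by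
      intro x hx
      have hLx : PW x ∈ L := hPWL x hx
      refine ⟨b.repr ⟨PW x, hLx⟩ i₀, ?_⟩
      show (bR.coord i₀) (PW x) = _
      rw [Module.Basis.coord_apply]
      have h1 := b.ofZLatticeBasis_repr_apply ℝ L (⟨PW x, hLx⟩ : ↥L) i₀
      exact h1
    have hd : ∀ i : Fin n, ∃ z : ℤ, F (Pi.single i (1:ℝ)) = (z:ℝ) :=
      fun i => hFZ _ (hsingle i)
    choose d hdspec using hd
    have hFx : ∀ x : Fin n → ℝ, F x = ∑ i, (d i : ℝ) * x i := by
      intro x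
      conv_lhs => rw [pi_eq_sum_univ x]
      rw [map_sum]
      refine Finset.sum_congr rfl fun i _ => ?_
      have hsingle_eq : (fun j => if i = j then (1:ℝ) else 0)
          = (Pi.single i (1:ℝ) : Fin n → ℝ) := by
        funext j
        simp [Pi.single_apply, eq_comm]
      rw [map_smul, hsingle_eq, hdspec i, smul_eq_mul, mul_comm]
    have hFC : ∀ u ∈ C, F u = 0 := by
      intro u hu
      by_contra hFu
      have habs : (0:ℝ) < |F u| := abs_pos.2 hFu
      set t : ℝ := |F u|⁻¹ / 2 with ht
      have ht0 : (0:ℝ) ≤ t := by positivity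
      obtain ⟨z, hz⟩ := hFZ (t • u) (hCH _ (hCcone u hu t ht0))
      have hzval : |(z:ℝ)| = 1/2 := by
        rw [← hz, map_smul, smul_eq_mul, abs_mul, abs_of_nonneg ht0, ht]
        field_simp
      rcases eq_or_ne z 0 with rfl | hz0
      · norm_num at hzval
      · have h2 : (1:ℝ) ≤ |(z:ℝ)| := by
          have := Int.one_le_abs hz0
          exact_mod_cast this
        rw [hzval] at h2
        norm_num at h2
    have hd0 : d = 0 := hortho d (fun u hu => by rw [← hFx]; exact hFC u hu)
    have hF1 : F ((bR i₀ : ↥W) : Fin n → ℝ) = 1 := by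
      show (bR.coord i₀) (PW ((bR i₀ : ↥W) : Fin n → ℝ)) = 1
      rw [show PW ((bR i₀ : ↥W) : Fin n → ℝ) = bR i₀ from
        Submodule.linearProjOfIsCompl_apply_left hW.symm (bR i₀)]
      simp [Module.Basis.coord_apply]
    rw [hFx] at hF1
    simp [hd0] at hF1
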